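/- Let p ∈ [0,1]. The sum of the depolarizing weights of the four patterns IIII, XXXX, YYYY, ZZZZ equals (1−p)⁴ + 3(p/3)⁴ = 1 − 4p + 6p² − 4p³ + 28p⁴/27. Moreover the polynomial D(p) = 1 − 4p + 8p² − 64p³/9 + 64p⁴/27 is positive on [0,1], so the success probability of the two-logical-qubit error-detection scheme using two noisy EPR pairs equals p_s(p) = (1 − 4p + 6p² − 4p³ + 28p⁴/27)/(1 − 4p + 8p² − 64p³/9 + 64p⁴/27). -/
import Mathlib


/-- Pauli labels `{I, X, Y, Z}`. -/
inductive Pauli | I | X | Y | Z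
deriving DecidableEq, Repr

instance : Fintype Pauli :=
  ⟨{.I, .X, .Y, .Z}, by intro x; cases x <;> decide⟩

/-- The depolarizing weight of a Pauli label: `1 - p` for `I` and `p/3` for `X`, `Y`, `Z`. -/
noncomputable def w (p : ℝ) : Pauli → ℝ
  | .I => 1 - p
  | _ => p / 3

/-- The depolarizing weight of a 4-tuple: the product of the weights of its components. -/
noncomputable def w4 (p : ℝ) (t : Pauli × Pauli × Pauli × Pauli) : ℝ :=
  w p t.1 * w p t.2.1 * w p t.2.2.1 * w p t.2.2.2

/-- The components of a 4-tuple of Pauli labels, as a list. -/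
def comps (t : Pauli × Pauli × Pauli × Pauli) : List Pauli :=
  [t.1, t.2.1, t.2.2.1, t.2.2.2]

/-- The number of X-type components (labels in `{X, Y}`) of a 4-tuple. -/
def xCount (t : Pauli × Pauli × Pauli × Pauli) : ℕ :=
  (comps t).countP (fun P => P = Pauli.X || P = Pauli.Y)

/-- The number of Z-type components (labels in `{Y, Z}`) of a 4-tuple. -/
def zCount (t : Pauli × Pauli × Pauli × Pauli) : ℕ :=
  (comps t).countP (fun P => P = Pauli.Y || P = Pauli.Z)

/-- The set of syndrome-zero 4-tuple error patterns of the two-logical-qubit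
error-detection scheme using two noisy EPR pairs. -/
def T : Finset (Pauli × Pauli × Pauli × Pauli) :=
  Finset.univ.filter (fun t => Even (xCount t) ∧ Even (zCount t))

/-- The four patterns `IIII, XXXX, YYYY, ZZZZ` leaving the two logical qubits in their
legitimate state. -/
def Q : Finset (Pauli × Pauli × Pauli × Pauli) :=
  {(.I, .I, .I, .I), (.X, .X, .X, .X), (.Y, .Y, .Y, .Y), (.Z, .Z, .Z, .Z)}

/-- The denominator polynomial `D(p) = 1 − 4p + 8p² − 64p³/9 + 64p⁴/27`. -/
noncomputable def D (p : ℝ) : ℝ := 1 - 4*p + 8*p^2 - 64*p^3/9 + 64*p^4/27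

theorem stmt11 (p : ℝ) (hp : p ∈ Set.Icc (0 : ℝ) 1) :
    (∑ t ∈ Q, w4 p t) = (1 - p)^4 + 3*(p/3)^4 ∧
    (1 - p)^4 + 3*(p/3)^4 = 1 - 4*p + 6*p^2 - 4*p^3 + 28*p^4/27 ∧
    0 < D p ∧
    (∑ t ∈ Q, w4 p t) / D p
      = (1 - 4*p + 6*p^2 - 4*p^3 + 28*p^4/27) / (1 - 4*p + 8*p^2 - 64*p^3/9 + 64*p^4/27) := by
  obtain ⟨h0, h1⟩ := hp
  have hsum : (∑ t ∈ Q, w4 p t) = (1 - p)^4 + 3*(p/3)^4 := by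
    simp only [Q, Finset.sum_insert, Finset.mem_insert, Finset.mem_singleton,
      Finset.sum_singleton, Prod.mk.injEq, w4, w, reduceCtorEq, false_and, or_self,
      not_false_eq_true]
    ring
  have hD : 0 < D p := by
    unfold D
    nlinarith [sq_nonneg (1-2*p), sq_nonneg p, sq_nonneg (p*(1-p)), sq_nonneg (p^2), mul_nonneg h0 (sub_nonneg.2 h1)]
  exact ⟨hsum, by ring, hD, by rw [hsum]; unfold D; ring⟩
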